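/- In the partic algebra PP_N, for a normal-form monomial m = a_{N-1}^{d_{N-1}} ⋯ a_2^{d_2} a_1^{k_1} ⋯ a_{N-1}^{k_{N-1}} (with the normal-form inequalities), if d_i = d_{i-1} + k_{i-1}, then a_i · m equals the normal-form monomial obtained from m by replacing k_i with k_i + 1; if d_i < d_{i-1} + k_{i-1}, then a_i · m equals the normal-form monomial obtained from m by replacing d_i with d_i + 1. In both cases the resulting monomial again satisfies the normal-form inequalities. -/

import Mathlib

inductive ParticRel (K : Type*) [CommRing K] (N : ℕ) :
    FreeAlgebra K (Fin (N - 1)) → FreeAlgebra K (Fin (N - 1)) → Prop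
  | plac1 : ∀ i j : Fin (N - 1), (i : ℕ) = (j : ℕ) + 1 →
      ParticRel K N (FreeAlgebra.ι K i * FreeAlgebra.ι K j * FreeAlgebra.ι K i)
        (FreeAlgebra.ι K i * FreeAlgebra.ι K i * FreeAlgebra.ι K j)
  | plac2 : ∀ i j : Fin (N - 1), (j : ℕ) = (i : ℕ) + 1 →
      ParticRel K N (FreeAlgebra.ι K i * FreeAlgebra.ι K j * FreeAlgebra.ι K i)
        (FreeAlgebra.ι K j * FreeAlgebra.ι K i * FreeAlgebra.ι K i)
  | comm : ∀ i j : Fin (N - 1), (i : ℕ) + 1 < (j : ℕ) →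
      ParticRel K N (FreeAlgebra.ι K i * FreeAlgebra.ι K j)
        (FreeAlgebra.ι K j * FreeAlgebra.ι K i)
  | partic : ∀ lo mid hi : Fin (N - 1), (mid : ℕ) = (lo : ℕ) + 1 → (hi : ℕ) = (mid : ℕ) + 1 →
      ParticRel K N
        (FreeAlgebra.ι K mid * FreeAlgebra.ι K lo * FreeAlgebra.ι K hi * FreeAlgebra.ι K mid)
        (FreeAlgebra.ι K hi * FreeAlgebra.ι K mid * FreeAlgebra.ι K lo * FreeAlgebra.ι K mid)

/-- The partic algebra `PP_N`, with generators `a_1, …, a_{N-1}`. -/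
abbrev ParticAlgebra (K : Type*) [CommRing K] (N : ℕ) := RingQuot (ParticRel K N)

/-- The generator `a_i` of the partic algebra, for `1 ≤ i ≤ N-1` (junk value `0`
outside that range). -/
noncomputable def ppa (K : Type*) [CommRing K] (N : ℕ) (i : ℕ) : ParticAlgebra K N :=
  if h : 1 ≤ i ∧ i ≤ N - 1 then
    RingQuot.mkAlgHom K (ParticRel K N) (FreeAlgebra.ι K ⟨i - 1, by omega⟩) else 0

/-- The normal-form monomial
`a_{N-1}^{d_{N-1}} ⋯ a_2^{d_2} · a_1^{e_1} a_2^{e_2} ⋯ a_{N-1}^{e_{N-1}}`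
in the partic algebra. -/
noncomputable def nfMon (K : Type*) [CommRing K] (N : ℕ) (d e : ℕ → ℕ) : ParticAlgebra K N :=
  ((List.range (N - 2)).map fun t => ppa K N (N - 1 - t) ^ d (N - 1 - t)).prod *
    ((List.range (N - 1)).map fun t => ppa K N (t + 1) ^ e (t + 1)).prod

section ParticAux

variable (K : Type*) [CommRing K] (N : ℕ)

/-- product of a word of generators -/
noncomputable def wp (l : List ℕ) : ParticAlgebra K N := (l.map (ppa K N)).prod

@[simp] lemma wp_nil : wp K N [] = 1 := rfl

lemma wp_cons (x : ℕ) (l : List ℕ) : wp K N (x :: l) = ppa K N x * wp K N l := by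
  simp [wp]

lemma wp_append (l₁ l₂ : List ℕ) : wp K N (l₁ ++ l₂) = wp K N l₁ * wp K N l₂ := by
  simp [wp]

lemma wp_replicate (k x : ℕ) : wp K N (List.replicate k x) = ppa K N x ^ k := by
  simp [wp, List.map_replicate, List.prod_replicate]

lemma wp_singleton (x : ℕ) : wp K N [x] = ppa K N x := by simp [wp]

variable {N}

lemma ppa_eq {x : ℕ} (hx1 : 1 ≤ x) (hx2 : x ≤ N - 1) :
    ppa K N x = RingQuot.mkAlgHom K (ParticRel K N) (FreeAlgebra.ι K ⟨x - 1, by omega⟩) := by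
  rw [ppa, dif_pos ⟨hx1, hx2⟩]

lemma ppa_out {x : ℕ} (hx : ¬ (1 ≤ x ∧ x ≤ N - 1)) : ppa K N x = 0 := by
  rw [ppa, dif_neg hx]

/-- plac1, 1-based: `a_{x+1} a_x a_{x+1} = a_{x+1} a_{x+1} a_x` -/
lemma rel_plac1 {x : ℕ} (hx1 : 1 ≤ x) (hx2 : x + 1 ≤ N - 1) :
    ppa K N (x+1) * ppa K N x * ppa K N (x+1) = ppa K N (x+1) * ppa K N (x+1) * ppa K N x := by
  rw [ppa_eq K (by omega : 1 ≤ x+1) hx2, ppa_eq K hx1 (by omega), ← map_mul, ← map_mul,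
    ← map_mul, ← map_mul]
  exact RingQuot.mkAlgHom_rel K (ParticRel.plac1 _ _ (by simp; omega))

/-- plac2, 1-based: `a_x a_{x+1} a_x = a_{x+1} a_x a_x` -/
lemma rel_plac2 {x : ℕ} (hx1 : 1 ≤ x) (hx2 : x + 1 ≤ N - 1) :
    ppa K N x * ppa K N (x+1) * ppa K N x = ppa K N (x+1) * ppa K N x * ppa K N x := by
  rw [ppa_eq K (by omega : 1 ≤ x+1) hx2, ppa_eq K hx1 (by omega), ← map_mul, ← map_mul,
    ← map_mul, ← map_mul]
  exact RingQuot.mkAlgHom_rel K (ParticRel.plac2 _ _ (by simp; omega))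

/-- partic, 1-based: `a_x a_{x-1} a_{x+1} a_x = a_{x+1} a_x a_{x-1} a_x` for `2 ≤ x` -/
lemma rel_partic {x : ℕ} (hx1 : 2 ≤ x) (hx2 : x + 1 ≤ N - 1) :
    ppa K N x * ppa K N (x-1) * ppa K N (x+1) * ppa K N x
      = ppa K N (x+1) * ppa K N x * ppa K N (x-1) * ppa K N x := by
  rw [ppa_eq K (by omega : 1 ≤ x+1) hx2, ppa_eq K (by omega : 1 ≤ x) (by omega),
    ppa_eq K (by omega : 1 ≤ x - 1) (by omega), ← map_mul, ← map_mul, ← map_mul,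
    ← map_mul, ← map_mul, ← map_mul]
  exact RingQuot.mkAlgHom_rel K
    (ParticRel.partic ⟨x-1-1, by omega⟩ ⟨x-1, by omega⟩ ⟨x+1-1, by omega⟩
      (by simp; omega) (by simp; omega))

/-- far-apart generators commute (no range hypotheses needed) -/
lemma commute_far {x y : ℕ} (h : x + 2 ≤ y ∨ y + 2 ≤ x) :
    Commute (ppa K N x) (ppa K N y) := by
  wlog hxy : x + 2 ≤ y generalizing x y
  · exact ((this (Or.inl (by omega)) (by omega)).symm)
  by_cases hx : 1 ≤ x ∧ x ≤ N - 1
  · by_cases hy : 1 ≤ y ∧ y ≤ N - 1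
    · have hxy' : (x - 1) + 1 < y - 1 := by omega
      have px : x - 1 < N - 1 := by omega
      have py : y - 1 < N - 1 := by omega
      unfold Commute SemiconjBy
      rw [ppa_eq K hx.1 hx.2, ppa_eq K hy.1 hy.2, ← map_mul, ← map_mul]
      exact RingQuot.mkAlgHom_rel K
        (ParticRel.comm (K := K) (N := N) ⟨x-1, px⟩ ⟨y-1, py⟩ hxy')
    · rw [ppa_out K hy]; exact Commute.zero_right _
  · rw [ppa_out K hx]; exact Commute.zero_left _

lemma commute_wp_far {x : ℕ} {l : List ℕ} (h : ∀ y ∈ l, x + 2 ≤ y ∨ y + 2 ≤ x) :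
    Commute (ppa K N x) (wp K N l) := by
  induction l with
  | nil => simp only [wp_nil]; exact Commute.one_right _
  | cons y l ih =>
      rw [wp_cons]
      exact (commute_far K (h y (by simp))).mul_right (ih fun z hz => h z (by simp [hz]))

end ParticAux

section ParticCore

variable {K : Type*} [CommRing K] {N : ℕ}

lemma swapR {u v : ParticAlgebra K N} (h : Commute u v) (z : ParticAlgebra K N) :
    u * (v * z) = v * (u * z) := by rw [← mul_assoc, h.eq, mul_assoc]

lemma mulC {X Y : ParticAlgebra K N} (P : ParticAlgebra K N) (h : X = Y) : P * X = P * Y := by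
  rw [h]

lemma mul3R {u v w u' v' w' : ParticAlgebra K N} (h : u * v * w = u' * v' * w')
    (z : ParticAlgebra K N) : u * (v * (w * z)) = u' * (v' * (w' * z)) := by
  rw [← mul_assoc, ← mul_assoc, ← mul_assoc, ← mul_assoc, h]

lemma mul4R {u v w t u' v' w' t' : ParticAlgebra K N} (h : u * v * w * t = u' * v' * w' * t')
    (z : ParticAlgebra K N) : u * (v * (w * (t * z))) = u' * (v' * (w' * (t' * z))) := by
  rw [show u * (v * (w * (t * z))) = u * v * w * t * z by noncomm_ring,
    show u' * (v' * (w' * (t' * z))) = u' * v' * w' * t' * z by noncomm_ring, h]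

/-- right-assoc plac1 in `(i, i-1)` form : `a_i a_{i-1} a_i ⋯ = a_i a_i a_{i-1} ⋯` -/
lemma plac1R {i : ℕ} (h2 : 2 ≤ i) (hiN : i ≤ N - 1) (z : ParticAlgebra K N) :
    ppa K N i * (ppa K N (i-1) * (ppa K N i * z))
      = ppa K N i * (ppa K N i * (ppa K N (i-1) * z)) := by
  have h := rel_plac1 K (N := N) (x := i - 1) (by omega) (by omega)
  rw [show i - 1 + 1 = i by omega] at h
  exact mul3R h z

/-- right-assoc plac2 in `(i, i-1)` form : `a_{i-1} a_i a_{i-1} ⋯ = a_i a_{i-1} a_{i-1} ⋯` -/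
lemma plac2R {i : ℕ} (h2 : 2 ≤ i) (hiN : i ≤ N - 1) (z : ParticAlgebra K N) :
    ppa K N (i-1) * (ppa K N i * (ppa K N (i-1) * z))
      = ppa K N i * (ppa K N (i-1) * (ppa K N (i-1) * z)) := by
  have h := rel_plac2 K (N := N) (x := i - 1) (by omega) (by omega)
  rw [show i - 1 + 1 = i by omega] at h
  exact mul3R h z

/-- right-assoc plac2 in `(i, i+1)` form : `a_i a_{i+1} a_i ⋯ = a_{i+1} a_i a_i ⋯` -/
lemma plac2R' {i : ℕ} (h1 : 1 ≤ i) (hiN : i + 1 ≤ N - 1) (z : ParticAlgebra K N) :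
    ppa K N i * (ppa K N (i+1) * (ppa K N i * z))
      = ppa K N (i+1) * (ppa K N i * (ppa K N i * z)) :=
  mul3R (rel_plac2 K h1 hiN) z

/-- right-assoc partic : `a_{i-1} a_{i-2} a_i a_{i-1} ⋯ = a_i a_{i-1} a_{i-2} a_{i-1} ⋯` -/
lemma particR {i : ℕ} (h3 : 3 ≤ i) (hiN : i ≤ N - 1) (z : ParticAlgebra K N) :
    ppa K N (i-1) * (ppa K N (i-2) * (ppa K N i * (ppa K N (i-1) * z)))
      = ppa K N i * (ppa K N (i-1) * (ppa K N (i-2) * (ppa K N (i-1) * z))) := by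
  have h := rel_partic K (N := N) (x := i - 1) (by omega) (by omega)
  rw [show i - 1 + 1 = i by omega, show i - 1 - 1 = i - 2 by omega] at h
  exact mul4R h z

lemma decompList {α : Type*} [DecidableEq α] (b : α) :
    ∀ M : List α, b ∉ M ∨ ∃ Q M', M = Q ++ b :: M' ∧ b ∉ Q := by
  intro M
  induction M with
  | nil => left; simp
  | cons x M ih =>
    by_cases hx : x = b
    · subst hx; right; exact ⟨[], M, rfl, by simp⟩
    · rcases ih with h | ⟨Q, M', rfl, hQ⟩
      · left; simp only [List.mem_cons, not_or]; exact ⟨fun h' => hx h'.symm, h⟩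
      · right
        refine ⟨x :: Q, M', rfl, ?_⟩
        simp only [List.mem_cons, not_or]
        exact ⟨fun h' => hx h'.symm, hQ⟩

/-- The key straightening engine: joint induction proving
`L*`: `a_i · M · a_{i-1} = M · a_i · a_{i-1}` for any word `M` in letters `≤ i-1`, and
`P`: `a_i a_{i-1} Q a_{i-1} = a_{i-1} Q a_i a_{i-1}` for any word `Q` in letters `≤ i-2`. -/
lemma coreInd (K : Type*) [CommRing K] (N : ℕ) : ∀ n : ℕ,
    (∀ (i : ℕ) (M : List ℕ) (z : ParticAlgebra K N), M.length ≤ n → 2 ≤ i → i ≤ N - 1 →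
      (∀ x ∈ M, 1 ≤ x ∧ x + 1 ≤ i) →
      ppa K N i * (wp K N M * (ppa K N (i-1) * z))
        = wp K N M * (ppa K N i * (ppa K N (i-1) * z))) ∧
    (∀ (i : ℕ) (Q : List ℕ) (z : ParticAlgebra K N), Q.length ≤ n → 2 ≤ i → i ≤ N - 1 →
      (∀ x ∈ Q, 1 ≤ x ∧ x + 2 ≤ i) →
      ppa K N i * (ppa K N (i-1) * (wp K N Q * (ppa K N (i-1) * z)))
        = ppa K N (i-1) * (wp K N Q * (ppa K N i * (ppa K N (i-1) * z)))) := by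
  intro n
  induction n using Nat.strong_induction_on with
  | _ n IH =>
  constructor
  · -- L*
    intro i M z hlen h2 hiN hM
    match M with
    | [] => simp
    | x :: M' =>
      have hx := hM x (by simp)
      have hn1 : 1 ≤ n := le_trans (by simp) hlen
      have hlen' : M'.length ≤ n - 1 := by simp at hlen; omega
      rcases Nat.lt_or_ge (x + 1) i with hfar | hnear
      · -- x ≤ i - 2 : commute out
        simp only [wp_cons, mul_assoc]
        calc ppa K N i * (ppa K N x * (wp K N M' * (ppa K N (i-1) * z)))
            = ppa K N x * (ppa K N i * (wp K N M' * (ppa K N (i-1) * z))) :=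
              swapR (commute_far K (Or.inr (by omega))) _
          _ = ppa K N x * (wp K N M' * (ppa K N i * (ppa K N (i-1) * z))) :=
              mulC _ ((IH (n-1) (by omega)).1 i M' z hlen' h2 hiN
                (fun y hy => hM y (by simp [hy])))
      · -- x = i - 1
        obtain rfl : x = i - 1 := by omega
        rcases decompList (i-1) M' with hnb | ⟨Q, M'', rfl, hQ⟩
        · -- no more (i-1) : use P
          simp only [wp_cons, mul_assoc]
          exact (IH (n-1) (by omega)).2 i M' z hlen' h2 hiN
            (fun y hy => by
              have := hM y (by simp [hy])
              have hne : y ≠ i - 1 := fun h => hnb (h ▸ hy)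
              omega)
        · -- M = (i-1) :: Q ++ (i-1) :: M''
          have hlQ : ((i-1) :: Q).length ≤ n - 1 := by
            simp at hlen ⊢; omega
          have hlM'' : (((i-1)) :: M'').length ≤ n - 1 := by
            simp at hlen ⊢; omega
          have hQl : ∀ y ∈ (i-1) :: Q, 1 ≤ y ∧ y + 1 ≤ i := by
            intro y hy
            rcases List.mem_cons.1 hy with rfl | hy'
            · omega
            · exact hM y (by simp [hy'])
          have hMl : ∀ y ∈ (i-1) :: M'', 1 ≤ y ∧ y + 1 ≤ i := by
            intro y hy
            rcases List.mem_cons.1 hy with rfl | hy'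
            · omega
            · exact hM y (by simp [hy'])
          have SA := (IH (n-1) (by omega)).1 i ((i-1) :: Q)
            (wp K N M'' * (ppa K N (i-1) * z)) hlQ h2 hiN hQl
          have SB := (IH (n-1) (by omega)).1 i ((i-1) :: M'') z hlM'' h2 hiN hMl
          simp only [wp_cons, wp_append, mul_assoc] at SA SB ⊢
          rw [SA]
          exact mulC _ (mulC _ SB)
  · -- P
    intro i Q z hlen h2 hiN hQ
    match Q with
    | [] =>
      simp only [wp_nil, one_mul]
      exact (plac2R h2 hiN z).symm
    | x :: Q' =>
      have hx := hQ x (by simp)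
      have hn1 : 1 ≤ n := le_trans (by simp) hlen
      have hlen' : Q'.length ≤ n - 1 := by simp at hlen; omega
      have h3 : 3 ≤ i := by omega
      rcases Nat.lt_or_ge (x + 2) i with hfar | hnear
      · -- x ≤ i - 3 : commute out past a_i and a_{i-1}
        simp only [wp_cons, mul_assoc]
        calc ppa K N i * (ppa K N (i-1) * (ppa K N x * (wp K N Q' * (ppa K N (i-1) * z))))
            = ppa K N i * (ppa K N x * (ppa K N (i-1) * (wp K N Q' * (ppa K N (i-1) * z)))) :=
              mulC _ (swapR (commute_far K (Or.inr (by omega))) _)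
          _ = ppa K N x * (ppa K N i * (ppa K N (i-1) * (wp K N Q' * (ppa K N (i-1) * z)))) :=
              swapR (commute_far K (Or.inr (by omega))) _
          _ = ppa K N x * (ppa K N (i-1) * (wp K N Q' * (ppa K N i * (ppa K N (i-1) * z)))) :=
              mulC _ ((IH (n-1) (by omega)).2 i Q' z hlen' h2 hiN
                (fun y hy => hQ y (by simp [hy])))
          _ = ppa K N (i-1) * (ppa K N x * (wp K N Q' * (ppa K N i * (ppa K N (i-1) * z)))) :=
              swapR (commute_far K (Or.inl (by omega))) _
      · -- x = i - 2
        obtain rfl : x = i - 2 := by omega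
        rcases decompList (i-2) Q' with hnb | ⟨R, Q'', rfl, hR⟩
        · -- no more (i-2) in Q' : partic directly
          have hcomm : Commute (ppa K N (i-1)) (wp K N Q') :=
            commute_wp_far K (fun y hy => by
              have := hQ y (by simp [hy])
              have hne : y ≠ i - 2 := fun h => hnb (h ▸ hy)
              omega)
          have hcommi : Commute (ppa K N i) (wp K N Q') :=
            commute_wp_far K (fun y hy => by
              have := hQ y (by simp [hy]); omega)
          simp only [wp_cons, mul_assoc]
          calc ppa K N i * (ppa K N (i-1) * (ppa K N (i-2) * (wp K N Q' * (ppa K N (i-1) * z))))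
              = ppa K N i * (ppa K N (i-1) * (ppa K N (i-2) * (ppa K N (i-1) * (wp K N Q' * z)))) :=
                mulC _ (mulC _ (mulC _ (swapR hcomm.symm _)))
            _ = ppa K N (i-1) * (ppa K N (i-2) * (ppa K N i * (ppa K N (i-1) * (wp K N Q' * z)))) :=
                (particR h3 hiN _).symm
            _ = ppa K N (i-1) * (ppa K N (i-2) * (ppa K N i * (wp K N Q' * (ppa K N (i-1) * z)))) :=
                mulC _ (mulC _ (mulC _ (swapR hcomm _)))
            _ = ppa K N (i-1) * (ppa K N (i-2) * (wp K N Q' * (ppa K N i * (ppa K N (i-1) * z)))) :=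
                mulC _ (mulC _ (swapR hcommi _))
        · -- Q' = R ++ (i-2) :: Q''
          have hRlow : ∀ y ∈ R, 1 ≤ y ∧ y + 3 ≤ i := by
            intro y hy
            have := hQ y (by simp [hy])
            have hne : y ≠ i - 2 := fun h => hR (h ▸ hy)
            omega
          have hlR : ((i-2) :: R).length ≤ n - 1 := by simp at hlen ⊢; omega
          have hlQ'' : ((i-2) :: Q'').length ≤ n - 1 := by simp at hlen ⊢; omega
          have SA := (IH (n-1) (by omega)).1 (i-1) ((i-2) :: R)
            (wp K N Q'' * (ppa K N (i-1) * z)) hlR (by omega) (by omega)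
            (fun y hy => by
              rcases List.mem_cons.1 hy with rfl | hy'
              · omega
              · have := hRlow y hy'; omega)
          have SD := (IH (n-1) (by omega)).1 (i-1) ((i-2) :: R)
            (wp K N Q'' * (ppa K N i * (ppa K N (i-1) * z))) hlR (by omega) (by omega)
            (fun y hy => by
              rcases List.mem_cons.1 hy with rfl | hy'
              · omega
              · have := hRlow y hy'; omega)
          have SP := (IH (n-1) (by omega)).2 i ((i-2) :: Q'') z hlQ'' h2 hiN
            (fun y hy => by
              rcases List.mem_cons.1 hy with rfl | hy'
              · omega
              · exact hQ y (by simp [hy']))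
          rw [show i - 1 - 1 = i - 2 by omega] at SA SD
          have hwR : Commute (ppa K N i) (wp K N R) :=
            commute_wp_far K (fun y hy => by have := hRlow y hy; omega)
          simp only [wp_cons, wp_append, mul_assoc] at SA SD SP ⊢
          calc ppa K N i * (ppa K N (i-1) * (ppa K N (i-2) * (wp K N R *
                  (ppa K N (i-2) * (wp K N Q'' * (ppa K N (i-1) * z))))))
              = ppa K N i * (ppa K N (i-2) * (wp K N R * (ppa K N (i-1) *
                  (ppa K N (i-2) * (wp K N Q'' * (ppa K N (i-1) * z)))))) := mulC _ SA
            _ = ppa K N (i-2) * (ppa K N i * (wp K N R * (ppa K N (i-1) *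
                  (ppa K N (i-2) * (wp K N Q'' * (ppa K N (i-1) * z)))))) :=
                swapR (commute_far K (Or.inr (by omega))) _
            _ = ppa K N (i-2) * (wp K N R * (ppa K N i * (ppa K N (i-1) *
                  (ppa K N (i-2) * (wp K N Q'' * (ppa K N (i-1) * z)))))) :=
                mulC _ (swapR hwR _)
            _ = ppa K N (i-2) * (wp K N R * (ppa K N (i-1) * (ppa K N (i-2) *
                  (wp K N Q'' * (ppa K N i * (ppa K N (i-1) * z)))))) := mulC _ (mulC _ SP)
            _ = ppa K N (i-1) * (ppa K N (i-2) * (wp K N R * (ppa K N (i-2) *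
                  (wp K N Q'' * (ppa K N i * (ppa K N (i-1) * z)))))) := SD.symm

end ParticCore

section ParticLayer2

variable {K : Type*} [CommRing K] {N : ℕ}

/-- `L*` in final form. -/
lemma lstar {i : ℕ} (M : List ℕ) (z : ParticAlgebra K N) (h2 : 2 ≤ i) (hiN : i ≤ N - 1)
    (hM : ∀ x ∈ M, 1 ≤ x ∧ x + 1 ≤ i) :
    ppa K N i * (wp K N M * (ppa K N (i-1) * z))
      = wp K N M * (ppa K N i * (ppa K N (i-1) * z)) :=
  (coreInd K N M.length).1 i M z le_rfl h2 hiN hM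

/-- the hop lemma: `a_i a_{i+1} (M a_i ⋯) = a_{i+1} a_i (M a_i ⋯)` for `M` in letters `≤ i-1`. -/
lemma hopH {i : ℕ} (M : List ℕ) (z : ParticAlgebra K N) (h1 : 1 ≤ i) (hiN : i + 1 ≤ N - 1)
    (hM : ∀ x ∈ M, 1 ≤ x ∧ x + 1 ≤ i) :
    ppa K N i * (ppa K N (i+1) * (wp K N M * (ppa K N i * z)))
      = ppa K N (i+1) * (ppa K N i * (wp K N M * (ppa K N i * z))) := by
  have hc : Commute (ppa K N (i+1)) (wp K N M) :=
    commute_wp_far K (fun y hy => by have := hM y hy; omega)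
  have S := lstar (i := i+1) (i :: M) z (by omega) hiN
    (fun x hx => by rcases List.mem_cons.1 hx with rfl | hx' <;> [omega; (have := hM x hx'; omega)])
  simp only [Nat.add_sub_cancel, wp_cons, mul_assoc] at S
  calc ppa K N i * (ppa K N (i+1) * (wp K N M * (ppa K N i * z)))
      = ppa K N i * (wp K N M * (ppa K N (i+1) * (ppa K N i * z))) :=
        mulC _ (swapR hc _)
    _ = ppa K N (i+1) * (ppa K N i * (wp K N M * (ppa K N i * z))) := S.symm

/-- splitting a power on the right-assoc form -/
lemma powSplitR {u w : ParticAlgebra K N} (k : ℕ) : u ^ (k+1) * w = u * (u ^ k * w) := by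
  rw [pow_succ', mul_assoc]

lemma powMergeR {u w : ParticAlgebra K N} (k : ℕ) : u * (u ^ k * w) = u ^ (k+1) * w :=
  (powSplitR k).symm

/-- `Commute (a_i) (a_i a_{i-1})` -/
lemma commute_xy {i : ℕ} (h2 : 2 ≤ i) (hiN : i ≤ N - 1) :
    Commute (ppa K N i) (ppa K N i * ppa K N (i-1)) := by
  unfold Commute SemiconjBy
  have h := rel_plac1 K (N := N) (x := i - 1) (by omega) (by omega)
  rw [show i - 1 + 1 = i by omega] at h
  rw [← mul_assoc, ← h, mul_assoc]

/-- `(a_i a_{i-1})^k = a_i^k a_{i-1}^k` -/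
lemma xy_pow {i : ℕ} (h2 : 2 ≤ i) (hiN : i ≤ N - 1) (k : ℕ) :
    (ppa K N i * ppa K N (i-1)) ^ k = ppa K N i ^ k * ppa K N (i-1) ^ k := by
  induction k with
  | zero => simp
  | succ k ih =>
    have t3 : ∀ j : ℕ, ppa K N (i-1) ^ j * (ppa K N i * ppa K N (i-1))
        = ppa K N i * ppa K N (i-1) ^ (j+1) := by
      intro j
      induction j with
      | zero => simp [pow_succ]
      | succ j ihj =>
        have h := rel_plac2 K (N := N) (x := i - 1) (by omega) (by omega)
        rw [show i - 1 + 1 = i by omega] at h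
        calc ppa K N (i-1) ^ (j+1) * (ppa K N i * ppa K N (i-1))
            = ppa K N (i-1) * (ppa K N (i-1) ^ j * (ppa K N i * ppa K N (i-1))) := by
              rw [powSplitR]
          _ = ppa K N (i-1) * (ppa K N i * ppa K N (i-1) ^ (j+1)) := by rw [ihj]
          _ = ppa K N (i-1) * (ppa K N i * (ppa K N (i-1) * ppa K N (i-1) ^ j)) := by
              rw [pow_succ']
          _ = ppa K N i * (ppa K N (i-1) * (ppa K N (i-1) * ppa K N (i-1) ^ j)) := by
              rw [← mul_assoc, ← mul_assoc, h, mul_assoc, mul_assoc]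
          _ = ppa K N i * ppa K N (i-1) ^ (j+1+1) := by
              rw [← pow_succ', ← pow_succ']
    calc (ppa K N i * ppa K N (i-1)) ^ (k+1)
        = (ppa K N i * ppa K N (i-1)) ^ k * (ppa K N i * ppa K N (i-1)) := pow_succ _ _
      _ = ppa K N i ^ k * ppa K N (i-1) ^ k * (ppa K N i * ppa K N (i-1)) := by rw [ih]
      _ = ppa K N i ^ k * (ppa K N (i-1) ^ k * (ppa K N i * ppa K N (i-1))) := by
          rw [mul_assoc]
      _ = ppa K N i ^ k * (ppa K N i * ppa K N (i-1) ^ (k+1)) := by rw [t3 k]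
      _ = ppa K N i ^ (k+1) * ppa K N (i-1) ^ (k+1) := by
          rw [← mul_assoc, ← pow_succ]

/-- right-assoc form of `xy_pow` -/
lemma xy_powR {i : ℕ} (h2 : 2 ≤ i) (hiN : i ≤ N - 1) (k : ℕ) (w : ParticAlgebra K N) :
    ppa K N i ^ k * (ppa K N (i-1) ^ k * w) = (ppa K N i * ppa K N (i-1)) ^ k * w := by
  rw [← mul_assoc, ← xy_pow h2 hiN]

/-- the two-letter traveling lemma, right-assoc:
`a_i^{k+1} a_{i-1}^k ⋯ = a_i^k a_{i-1}^k a_i ⋯` -/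
lemma twoLetterR {i : ℕ} (h2 : 2 ≤ i) (hiN : i ≤ N - 1) (k : ℕ) (w : ParticAlgebra K N) :
    ppa K N i ^ (k+1) * (ppa K N (i-1) ^ k * w)
      = ppa K N i ^ k * (ppa K N (i-1) ^ k * (ppa K N i * w)) := by
  have hc : Commute (ppa K N i) ((ppa K N i * ppa K N (i-1)) ^ k) :=
    (commute_xy h2 hiN).pow_right k
  calc ppa K N i ^ (k+1) * (ppa K N (i-1) ^ k * w)
      = ppa K N i * (ppa K N i ^ k * (ppa K N (i-1) ^ k * w)) := powSplitR k
    _ = ppa K N i * ((ppa K N i * ppa K N (i-1)) ^ k * w) := mulC _ (xy_powR h2 hiN k w)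
    _ = (ppa K N i * ppa K N (i-1)) ^ k * (ppa K N i * w) := swapR hc w
    _ = ppa K N i ^ k * (ppa K N (i-1) ^ k * (ppa K N i * w)) := (xy_powR h2 hiN k _).symm

/-- Lemma A5: the deposit lemma. If `d = d' + e'` then
`a_i^{d+1} a_{i-1}^{d'} m a_{i-1}^{e'} ⋯ = a_i^d a_{i-1}^{d'} m a_{i-1}^{e'} a_i ⋯`
whenever `m` commutes with `a_i`. -/
lemma lemA5 {i : ℕ} (h2 : 2 ≤ i) (hiN : i ≤ N - 1) {m : ParticAlgebra K N}
    (hm : Commute (ppa K N i) m) (d' e' : ℕ) (z : ParticAlgebra K N) :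
    ppa K N i ^ (d'+e'+1) * (ppa K N (i-1) ^ d' * (m * (ppa K N (i-1) ^ e' * z)))
      = ppa K N i ^ (d'+e') * (ppa K N (i-1) ^ d' * (m * (ppa K N (i-1) ^ e' * (ppa K N i * z)))) := by
  have hcxy : Commute (ppa K N i ^ (e'+1)) ((ppa K N i * ppa K N (i-1)) ^ d') :=
    ((commute_xy h2 hiN).pow_right d').pow_left (e'+1)
  have hcxy' : Commute (ppa K N i ^ e') ((ppa K N i * ppa K N (i-1)) ^ d') :=
    ((commute_xy h2 hiN).pow_right d').pow_left e'
  calc ppa K N i ^ (d'+e'+1) * (ppa K N (i-1) ^ d' * (m * (ppa K N (i-1) ^ e' * z)))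
      = ppa K N i ^ ((e'+1)+d') * (ppa K N (i-1) ^ d' * (m * (ppa K N (i-1) ^ e' * z))) := by
        rw [show d'+e'+1 = (e'+1)+d' by omega]
    _ = ppa K N i ^ (e'+1) * (ppa K N i ^ d' * (ppa K N (i-1) ^ d' * (m * (ppa K N (i-1) ^ e' * z)))) := by
        rw [pow_add, mul_assoc]
    _ = ppa K N i ^ (e'+1) * ((ppa K N i * ppa K N (i-1)) ^ d' * (m * (ppa K N (i-1) ^ e' * z))) :=
        mulC _ (xy_powR h2 hiN d' _)
    _ = (ppa K N i * ppa K N (i-1)) ^ d' * (ppa K N i ^ (e'+1) * (m * (ppa K N (i-1) ^ e' * z))) :=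
        swapR hcxy _
    _ = (ppa K N i * ppa K N (i-1)) ^ d' * (m * (ppa K N i ^ (e'+1) * (ppa K N (i-1) ^ e' * z))) :=
        mulC _ (swapR (hm.pow_left (e'+1)) _)
    _ = (ppa K N i * ppa K N (i-1)) ^ d' * (m * (ppa K N i ^ e' * (ppa K N (i-1) ^ e' * (ppa K N i * z)))) :=
        mulC _ (mulC _ (twoLetterR h2 hiN e' z))
    _ = (ppa K N i * ppa K N (i-1)) ^ d' * (ppa K N i ^ e' * (m * (ppa K N (i-1) ^ e' * (ppa K N i * z)))) :=
        mulC _ (swapR (hm.pow_left e').symm _)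
    _ = ppa K N i ^ e' * ((ppa K N i * ppa K N (i-1)) ^ d' * (m * (ppa K N (i-1) ^ e' * (ppa K N i * z)))) :=
        swapR hcxy'.symm _
    _ = ppa K N i ^ e' * (ppa K N i ^ d' * (ppa K N (i-1) ^ d' * (m * (ppa K N (i-1) ^ e' * (ppa K N i * z))))) :=
        mulC _ (xy_powR h2 hiN d' _).symm
    _ = ppa K N i ^ (d'+e') * (ppa K N (i-1) ^ d' * (m * (ppa K N (i-1) ^ e' * (ppa K N i * z)))) := by
        rw [← mul_assoc, ← pow_add, show e'+d' = d'+e' by omega]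

/-- Lemma B: moving `a_i` past the `a_{i+1}^p` block. -/
lemma lemB {i : ℕ} (h1 : 1 ≤ i) (hiN : i + 1 ≤ N - 1) :
    ∀ (p d e : ℕ) (M : List ℕ) (z : ParticAlgebra K N), p ≤ d + e →
    (∀ x ∈ M, 1 ≤ x ∧ x + 1 ≤ i) →
    ppa K N i * (ppa K N (i+1) ^ p * (ppa K N i ^ d * (wp K N M * (ppa K N i ^ e * z))))
      = ppa K N (i+1) ^ p * (ppa K N i * (ppa K N i ^ d * (wp K N M * (ppa K N i ^ e * z)))) := by
  intro p
  induction p with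
  | zero => intro d e M z _ _; simp
  | succ p IHp =>
    intro d e M z hp hM
    have hc : Commute (ppa K N (i+1)) (wp K N M) :=
      commute_wp_far K (fun y hy => by have := hM y hy; omega)
    match d with
    | d₀ + 1 =>
      have E1 : ppa K N (i+1) ^ p * (ppa K N i ^ (d₀+1) * (wp K N M * (ppa K N i ^ e * z)))
          = ppa K N i * (ppa K N (i+1) ^ p * (ppa K N i ^ d₀ * (wp K N M * (ppa K N i ^ e * z)))) := by
        have h := IHp d₀ e M z (by omega) hM
        rw [h, powMergeR]
      calc ppa K N i * (ppa K N (i+1) ^ (p+1) * (ppa K N i ^ (d₀+1) * (wp K N M * (ppa K N i ^ e * z))))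
          = ppa K N i * (ppa K N (i+1) * (ppa K N (i+1) ^ p * (ppa K N i ^ (d₀+1) * (wp K N M * (ppa K N i ^ e * z))))) := by
            rw [powSplitR]
        _ = ppa K N i * (ppa K N (i+1) * (ppa K N i * (ppa K N (i+1) ^ p * (ppa K N i ^ d₀ * (wp K N M * (ppa K N i ^ e * z)))))) :=
            mulC _ (mulC _ E1)
        _ = ppa K N (i+1) * (ppa K N i * (ppa K N i * (ppa K N (i+1) ^ p * (ppa K N i ^ d₀ * (wp K N M * (ppa K N i ^ e * z)))))) :=
            plac2R' h1 hiN _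
        _ = ppa K N (i+1) * (ppa K N i * (ppa K N (i+1) ^ p * (ppa K N i ^ (d₀+1) * (wp K N M * (ppa K N i ^ e * z))))) :=
            mulC _ (mulC _ E1.symm)
        _ = ppa K N (i+1) * (ppa K N (i+1) ^ p * (ppa K N i * (ppa K N i ^ (d₀+1) * (wp K N M * (ppa K N i ^ e * z))))) :=
            mulC _ (IHp (d₀+1) e M z (by omega) hM)
        _ = ppa K N (i+1) ^ (p+1) * (ppa K N i * (ppa K N i ^ (d₀+1) * (wp K N M * (ppa K N i ^ e * z)))) := by
            rw [powMergeR]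
    | 0 =>
      match e, hp with
      | e₀ + 1, _ =>
        have E2 : ppa K N i * (ppa K N (i+1) ^ p * (ppa K N i ^ e₀ * z))
            = ppa K N (i+1) ^ p * (ppa K N i ^ (e₀+1) * z) := by
          have h := IHp e₀ 0 [] z (by omega) (by simp)
          simp only [wp_nil, pow_zero, one_mul] at h
          rw [h, powMergeR]
        simp only [pow_zero, one_mul]
        calc ppa K N i * (ppa K N (i+1) ^ (p+1) * (wp K N M * (ppa K N i ^ (e₀+1) * z)))
            = ppa K N i * (ppa K N (i+1) * (ppa K N (i+1) ^ p * (wp K N M * (ppa K N i ^ (e₀+1) * z)))) := by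
              rw [powSplitR]
          _ = ppa K N i * (ppa K N (i+1) * (wp K N M * (ppa K N (i+1) ^ p * (ppa K N i ^ (e₀+1) * z)))) :=
              mulC _ (mulC _ (swapR (hc.pow_left p) _))
          _ = ppa K N i * (ppa K N (i+1) * (wp K N M * (ppa K N i * (ppa K N (i+1) ^ p * (ppa K N i ^ e₀ * z))))) :=
              mulC _ (mulC _ (mulC _ E2.symm))
          _ = ppa K N (i+1) * (ppa K N i * (wp K N M * (ppa K N i * (ppa K N (i+1) ^ p * (ppa K N i ^ e₀ * z))))) :=
              hopH M _ h1 hiN hM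
          _ = ppa K N (i+1) * (ppa K N i * (wp K N M * (ppa K N (i+1) ^ p * (ppa K N i ^ (e₀+1) * z)))) :=
              mulC _ (mulC _ (mulC _ E2))
          _ = ppa K N (i+1) * (ppa K N i * (ppa K N (i+1) ^ p * (wp K N M * (ppa K N i ^ (e₀+1) * z)))) :=
              mulC _ (mulC _ (swapR (hc.pow_left p).symm _))
          _ = ppa K N (i+1) * (ppa K N (i+1) ^ p * (ppa K N i * (wp K N M * (ppa K N i ^ (e₀+1) * z)))) := by
              have h := IHp 0 (e₀+1) M z (by omega) hM
              simp only [pow_zero, one_mul] at h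
              rw [h]
          _ = ppa K N (i+1) ^ (p+1) * (ppa K N i * (wp K N M * (ppa K N i ^ (e₀+1) * z))) := by
            rw [powMergeR]

end ParticLayer2

section ParticLayer3

variable {K : Type*} [CommRing K] {N : ℕ}

lemma prod_range_split (f : ℕ → ParticAlgebra K N) {m k : ℕ} (h : k ≤ m) :
    ((List.range m).map f).prod
      = ((List.range k).map f).prod * ((List.range (m-k)).map fun t => f (k+t)).prod := by
  conv_lhs => rw [show m = k + (m-k) by omega]
  rw [List.range_add, List.map_append, List.prod_append, List.map_map]
  rfl

lemma prod_range_one (f : ℕ → ParticAlgebra K N) :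
    ((List.range 1).map f).prod = f 0 := by
  simp [List.range_succ]

/-- word-product of a flatten of replicates equals the product of powers -/
lemma wp_flat (cnt lett : ℕ → ℕ) (k : ℕ) :
    wp K N (((List.range k).map fun t => List.replicate (cnt t) (lett t)).flatten)
      = ((List.range k).map fun t => ppa K N (lett t) ^ cnt t).prod := by
  induction k with
  | zero => simp
  | succ k ih =>
    rw [List.range_succ, List.map_append, List.map_append, List.flatten_append,
      wp_append, List.prod_append, ih]
    simp [wp_replicate]

lemma mem_flat {cnt lett : ℕ → ℕ} {k x : ℕ}
    (hx : x ∈ ((List.range k).map fun t => List.replicate (cnt t) (lett t)).flatten) :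
    ∃ t < k, x = lett t := by
  rw [List.mem_flatten] at hx
  obtain ⟨l, hl, hxl⟩ := hx
  rw [List.mem_map] at hl
  obtain ⟨t, ht, rfl⟩ := hl
  exact ⟨t, List.mem_range.1 ht, List.eq_of_mem_replicate hxl⟩

/-- the "low" word: `a_{i-1}^{d_{i-1}} ⋯ a_2^{d_2}` -/
def midWd (d : ℕ → ℕ) (i : ℕ) : List ℕ :=
  ((List.range (i-2)).map fun t => List.replicate (d (i-1-t)) (i-1-t)).flatten

/-- the "low" word: `a_1^{e_1} ⋯ a_{i-1}^{e_{i-1}}` -/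
def midWe (e : ℕ → ℕ) (i : ℕ) : List ℕ :=
  ((List.range (i-1)).map fun t => List.replicate (e (t+1)) (t+1)).flatten

lemma midWd_letters {d : ℕ → ℕ} {i : ℕ} (h2 : 2 ≤ i) :
    ∀ x ∈ midWd d i, 1 ≤ x ∧ x + 1 ≤ i := by
  intro x hx
  obtain ⟨t, ht, rfl⟩ := mem_flat hx
  omega

lemma midWe_letters {e : ℕ → ℕ} {i : ℕ} (h2 : 2 ≤ i) :
    ∀ x ∈ midWe e i, 1 ≤ x ∧ x + 1 ≤ i := by
  intro x hx
  obtain ⟨t, ht, rfl⟩ := mem_flat hx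
  omega

/-- the high part `a_{N-1}^{d_{N-1}} ⋯ a_{N-k}^{d_{N-k}}` -/
noncomputable def phiD (K : Type*) [CommRing K] (N : ℕ) (d : ℕ → ℕ) (k : ℕ) :
    ParticAlgebra K N :=
  ((List.range k).map fun t => ppa K N (N-1-t) ^ d (N-1-t)).prod

/-- the tail `a_{i+1}^{e_{i+1}} ⋯ a_{N-1}^{e_{N-1}}` -/
noncomputable def restE (K : Type*) [CommRing K] (N : ℕ) (e : ℕ → ℕ) (i : ℕ) :
    ParticAlgebra K N :=
  ((List.range (N-1-i)).map fun t => ppa K N (i+1+t) ^ e (i+1+t)).prod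

/-- structural decomposition of the normal form monomial around position `i` -/
lemma nfSplit (d e : ℕ → ℕ) {i : ℕ} (hN : 3 ≤ N) (h2 : 2 ≤ i) (hiN : i ≤ N - 1) :
    nfMon K N d e = phiD K N d (N-1-i) *
      (ppa K N i ^ d i *
        (wp K N (midWd d i ++ midWe e i) *
          (ppa K N i ^ e i * restE K N e i))) := by
  rw [nfMon]
  rw [prod_range_split (fun t => ppa K N (N-1-t) ^ d (N-1-t)) (show N-1-i ≤ N-2 by omega)]
  rw [prod_range_split (fun t => ppa K N (t+1) ^ e (t+1)) (show i-1 ≤ N-1 by omega)]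
  have e1 : ((List.range (N-2-(N-1-i))).map fun t => ppa K N (N-1-(N-1-i+t)) ^ d (N-1-(N-1-i+t))).prod
      = ((List.range (i-1)).map fun t => ppa K N (i-t) ^ d (i-t)).prod := by
    rw [show N-2-(N-1-i) = i-1 by omega]
    refine congrArg _ (List.map_congr_left fun t ht => ?_)
    rw [List.mem_range] at ht
    rw [show N-1-(N-1-i+t) = i-t by omega]
  have e2 : ((List.range (i-1)).map fun t => ppa K N (i-t) ^ d (i-t)).prod
      = ppa K N i ^ d i * ((List.range (i-2)).map fun t => ppa K N (i-1-t) ^ d (i-1-t)).prod := by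
    rw [prod_range_split (fun t => ppa K N (i-t) ^ d (i-t)) (show 1 ≤ i-1 by omega),
      prod_range_one]
    rw [show i - 0 = i by omega, show i-1-1 = i-2 by omega]
    refine congrArg _ (congrArg _ (List.map_congr_left fun t ht => ?_))
    rw [show i - (1+t) = i-1-t by omega]
  have e3 : ((List.range (N-1-(i-1))).map fun t => ppa K N ((i-1+t)+1) ^ e ((i-1+t)+1)).prod
      = ppa K N i ^ e i * restE K N e i := by
    rw [show N-1-(i-1) = (N-1-i)+1 by omega]
    rw [show List.range ((N-1-i)+1) = 0 :: List.map Nat.succ (List.range (N-1-i)) from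
      List.range_succ_eq_map]
    rw [List.map_cons, List.prod_cons, show i-1+0+1 = i by omega]
    refine congrArg _ ?_
    rw [restE]
    rw [List.map_map]
    refine congrArg _ (List.map_congr_left fun t ht => ?_)
    simp only [Function.comp_apply, Nat.succ_eq_add_one]
    rw [show i-1+(t+1)+1 = i+1+t by omega]
  rw [e1, e2, e3, wp_append, midWd, midWe, wp_flat, wp_flat]
  rw [phiD]
  simp only [mul_assoc]

/-- splitting off the `a_{i+1}` block from the high part, when `i ≤ N-2`. -/
lemma phiD_split (d : ℕ → ℕ) {i : ℕ} (hN : 3 ≤ N) (h2 : 2 ≤ i) (hiN : i + 1 ≤ N - 1) :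
    phiD K N d (N-1-i)
      = phiD K N d (N-2-i) * ppa K N (i+1) ^ d (i+1) := by
  rw [phiD, prod_range_split (fun t => ppa K N (N-1-t) ^ d (N-1-t))
    (show N-2-i ≤ N-1-i by omega), show N-1-i-(N-2-i) = 1 by omega, prod_range_one,
    show N-1-(N-2-i+0) = i+1 by omega, phiD]

lemma commute_phiD (d : ℕ → ℕ) {i : ℕ} (k : ℕ) (hk : k + i + 1 ≤ N - 1) :
    Commute (ppa K N i) (phiD K N d k) := by
  refine Commute.list_prod_right _ _ fun x hx => ?_
  rw [List.mem_map] at hx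
  obtain ⟨t, ht, rfl⟩ := hx
  rw [List.mem_range] at ht
  exact (commute_far K (Or.inl (by omega))).pow_right _

/-- the middle word as `a_{i-1}^{d_{i-1}} ⋯ m ⋯ a_{i-1}^{e_{i-1}}` with `m` commuting
with `a_i`. -/
lemma midW_wp (d e : ℕ → ℕ) {i : ℕ} (h2 : 2 ≤ i) (hiN : i ≤ N - 1) (hd1 : d 1 = 0) :
    ∃ m : ParticAlgebra K N, Commute (ppa K N i) m ∧
      ∀ w : ParticAlgebra K N, wp K N (midWd d i ++ midWe e i) * w
        = ppa K N (i-1) ^ d (i-1) * (m * (ppa K N (i-1) ^ e (i-1) * w)) := by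
  rcases Nat.lt_or_ge i 3 with h3 | h3
  · -- i = 2
    obtain rfl : i = 2 := by omega
    refine ⟨1, Commute.one_right _, fun w => ?_⟩
    have hd : midWd d 2 = [] := by simp [midWd]
    have he : midWe e 2 = List.replicate (e 1) 1 := by
      simp [midWe, List.range_succ]
    rw [hd, he, List.nil_append, wp_replicate]
    simp only [show (2:ℕ) - 1 = 1 from rfl, hd1, pow_zero, one_mul]
  · -- i ≥ 3
    have hsd : midWd d i = List.replicate (d (i-1)) (i-1) ++
        ((List.range (i-3)).map fun t => List.replicate (d (i-2-t)) (i-2-t)).flatten := by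
      rw [midWd, show i-2 = (i-3)+1 by omega, List.range_succ_eq_map, List.map_cons,
        List.flatten_cons, show i-1-0 = i-1 by omega, List.map_map]
      refine congrArg _ (congrArg _ (List.map_congr_left fun t ht => ?_))
      simp only [Function.comp_apply, Nat.succ_eq_add_one]
      rw [show i-1-(t+1) = i-3+1-t by omega]
    have hse : midWe e i = ((List.range (i-2)).map fun t =>
        List.replicate (e (t+1)) (t+1)).flatten ++ List.replicate (e (i-1)) (i-1) := by
      rw [midWe, show i-1 = (i-2)+1 by omega, List.range_succ, List.map_append,
        List.flatten_append]
      simp only [List.map_cons, List.map_nil, List.flatten_cons, List.flatten_nil,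
        List.append_nil]
    set m1 : List ℕ := ((List.range (i-3)).map fun t => List.replicate (d (i-2-t)) (i-2-t)).flatten
    set m2 : List ℕ := ((List.range (i-2)).map fun t => List.replicate (e (t+1)) (t+1)).flatten
    refine ⟨wp K N m1 * wp K N m2, ?_, fun w => ?_⟩
    · refine ((commute_wp_far K fun y hy => ?_).mul_right (commute_wp_far K fun y hy => ?_))
      · obtain ⟨t, ht, rfl⟩ := mem_flat hy; right; omega
      · obtain ⟨t, ht, rfl⟩ := mem_flat hy; right; omega
    · rw [hsd, hse]
      rw [wp_append, wp_append, wp_append, wp_replicate, wp_replicate]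
      simp only [mul_assoc]

end ParticLayer3


/-- Left multiplication of a generator `a_i` against a normal-form monomial: if
`d_i = d_{i-1} + k_{i-1}` (convention `d_1 = 0`) then `k_i` increases by one, and if
`d_i < d_{i-1} + k_{i-1}` then `d_i` increases by one; in both cases the result again
satisfies the normal-form inequalities. -/
theorem stmt10 (K : Type*) [Field K] (N : ℕ) (hN : 3 ≤ N) (d e : ℕ → ℕ) (hd1 : d 1 = 0)
    (hnf : ∀ j, 2 ≤ j → j ≤ N - 1 → d j ≤ d (j - 1) + e (j - 1))
    (i : ℕ) (h1 : 2 ≤ i) (h2 : i ≤ N - 1) :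
    (d i = d (i - 1) + e (i - 1) →
      ppa K N i * nfMon K N d e = nfMon K N d (Function.update e i (e i + 1)) ∧
      (∀ j, 2 ≤ j → j ≤ N - 1 →
        d j ≤ d (j - 1) + Function.update e i (e i + 1) (j - 1))) ∧
    (d i < d (i - 1) + e (i - 1) →
      ppa K N i * nfMon K N d e =
          nfMon K N (Function.update d i (d i + 1)) e ∧
      (∀ j, 2 ≤ j → j ≤ N - 1 →
        Function.update d i (d i + 1) j ≤
          Function.update d i (d i + 1) (j - 1) + e (j - 1))) := by
  -- common structural data
  obtain ⟨m, hm, hmw⟩ := midW_wp (K := K) d e h1 h2 hd1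
  have hML : ∀ x ∈ midWd d i ++ midWe e i, 1 ≤ x ∧ x + 1 ≤ i := by
    intro x hx
    rcases List.mem_append.1 hx with h | h
    exacts [midWd_letters h1 x h, midWe_letters h1 x h]
  -- congruence lemmas for updates
  have hmidWe : midWe (Function.update e i (e i + 1)) i = midWe e i := by
    rw [midWe, midWe]
    refine congrArg _ (List.map_congr_left fun t ht => ?_)
    rw [List.mem_range] at ht
    rw [Function.update_apply, if_neg (by omega)]
  have hrestE : restE K N (Function.update e i (e i + 1)) i = restE K N e i := by
    rw [restE, restE]
    refine congrArg _ (List.map_congr_left fun t ht => ?_)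
    rw [List.mem_range] at ht
    rw [Function.update_apply, if_neg (by omega)]
  have hmidWd : midWd (Function.update d i (d i + 1)) i = midWd d i := by
    rw [midWd, midWd]
    refine congrArg _ (List.map_congr_left fun t ht => ?_)
    rw [List.mem_range] at ht
    rw [Function.update_apply, if_neg (by omega)]
  have hphiD : ∀ k, k ≤ N - 1 - i → phiD K N (Function.update d i (d i + 1)) k = phiD K N d k := by
    intro k hk
    rw [phiD, phiD]
    refine congrArg _ (List.map_congr_left fun t ht => ?_)
    rw [List.mem_range] at ht
    rw [Function.update_apply, if_neg (by omega)]
  constructor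
  · -- case 1 : d i = d (i-1) + e (i-1)
    intro heq
    constructor
    · -- the algebra identity
      rcases Nat.lt_or_ge i (N-1) with hilt | hitop
      · -- i < N - 1
        have hp : d (i+1) ≤ d i + e i := by
          have h := hnf (i+1) (by omega) (by omega)
          rwa [Nat.add_sub_cancel] at h
        have hTgt : nfMon K N d (Function.update e i (e i + 1))
            = phiD K N d (N-2-i) * (ppa K N (i+1) ^ d (i+1) * (ppa K N i ^ d i *
                (wp K N (midWd d i ++ midWe e i) *
                  (ppa K N i ^ (e i + 1) * restE K N e i)))) := by
          rw [nfSplit d _ hN h1 h2, phiD_split d hN h1 (by omega), hmidWe, hrestE,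
            Function.update_self]
          simp only [mul_assoc]
        rw [hTgt, nfSplit d e hN h1 h2, phiD_split d hN h1 (by omega)]
        simp only [mul_assoc]
        calc ppa K N i * (phiD K N d (N-2-i) * (ppa K N (i+1) ^ d (i+1) * (ppa K N i ^ d i *
                (wp K N (midWd d i ++ midWe e i) * (ppa K N i ^ e i * restE K N e i)))))
            = phiD K N d (N-2-i) * (ppa K N i * (ppa K N (i+1) ^ d (i+1) * (ppa K N i ^ d i *
                (wp K N (midWd d i ++ midWe e i) * (ppa K N i ^ e i * restE K N e i))))) :=
              swapR (commute_phiD d _ (by omega)) _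
          _ = phiD K N d (N-2-i) * (ppa K N (i+1) ^ d (i+1) * (ppa K N i * (ppa K N i ^ d i *
                (wp K N (midWd d i ++ midWe e i) * (ppa K N i ^ e i * restE K N e i))))) :=
              mulC _ (lemB (by omega) (by omega) (d (i+1)) (d i) (e i)
                (midWd d i ++ midWe e i) (restE K N e i) hp hML)
          _ = phiD K N d (N-2-i) * (ppa K N (i+1) ^ d (i+1) * (ppa K N i ^ (d i + 1) *
                (wp K N (midWd d i ++ midWe e i) * (ppa K N i ^ e i * restE K N e i)))) :=
              mulC _ (mulC _ (powMergeR _))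
          _ = phiD K N d (N-2-i) * (ppa K N (i+1) ^ d (i+1) * (ppa K N i ^ (d i + 1) *
                (ppa K N (i-1) ^ d (i-1) * (m * (ppa K N (i-1) ^ e (i-1) *
                  (ppa K N i ^ e i * restE K N e i)))))) :=
              mulC _ (mulC _ (mulC _ (hmw _)))
          _ = phiD K N d (N-2-i) * (ppa K N (i+1) ^ d (i+1) * (ppa K N i ^ (d (i-1) + e (i-1) + 1) *
                (ppa K N (i-1) ^ d (i-1) * (m * (ppa K N (i-1) ^ e (i-1) *
                  (ppa K N i ^ e i * restE K N e i)))))) := by rw [heq]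
          _ = phiD K N d (N-2-i) * (ppa K N (i+1) ^ d (i+1) * (ppa K N i ^ (d (i-1) + e (i-1)) *
                (ppa K N (i-1) ^ d (i-1) * (m * (ppa K N (i-1) ^ e (i-1) *
                  (ppa K N i * (ppa K N i ^ e i * restE K N e i))))))) :=
              mulC _ (mulC _ (lemA5 h1 h2 hm (d (i-1)) (e (i-1)) _))
          _ = phiD K N d (N-2-i) * (ppa K N (i+1) ^ d (i+1) * (ppa K N i ^ (d i) *
                (ppa K N (i-1) ^ d (i-1) * (m * (ppa K N (i-1) ^ e (i-1) *
                  (ppa K N i ^ (e i + 1) * restE K N e i)))))) := by rw [← heq, powMergeR]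
          _ = phiD K N d (N-2-i) * (ppa K N (i+1) ^ d (i+1) * (ppa K N i ^ d i *
                (wp K N (midWd d i ++ midWe e i) * (ppa K N i ^ (e i + 1) * restE K N e i)))) :=
              mulC _ (mulC _ (mulC _ (hmw _).symm))
      · -- i = N - 1
        have hi : i = N - 1 := by omega
        have hphi0 : phiD K N d (N-1-i) = 1 := by
          rw [phiD, show N-1-i = 0 by omega]; rfl
        have hrest0 : restE K N e i = 1 := by
          rw [restE, show N-1-i = 0 by omega]; rfl
        have hrest0' : restE K N (Function.update e i (e i + 1)) i = 1 := by
          rw [restE, show N-1-i = 0 by omega]; rfl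
        have hTgt : nfMon K N d (Function.update e i (e i + 1))
            = ppa K N i ^ d i * (wp K N (midWd d i ++ midWe e i) *
                (ppa K N i ^ (e i + 1) * 1)) := by
          rw [nfSplit d _ hN h1 h2, hphi0, hrest0', hmidWe, Function.update_self, one_mul]
        rw [hTgt, nfSplit d e hN h1 h2, hphi0, hrest0, one_mul]
        calc ppa K N i * (ppa K N i ^ d i * (wp K N (midWd d i ++ midWe e i) *
                (ppa K N i ^ e i * 1)))
            = ppa K N i ^ (d i + 1) * (wp K N (midWd d i ++ midWe e i) *
                (ppa K N i ^ e i * 1)) := powMergeR _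
          _ = ppa K N i ^ (d (i-1) + e (i-1) + 1) * (ppa K N (i-1) ^ d (i-1) * (m *
                (ppa K N (i-1) ^ e (i-1) * (ppa K N i ^ e i * 1)))) := by rw [heq, hmw _]
          _ = ppa K N i ^ (d (i-1) + e (i-1)) * (ppa K N (i-1) ^ d (i-1) * (m *
                (ppa K N (i-1) ^ e (i-1) * (ppa K N i * (ppa K N i ^ e i * 1))))) :=
              lemA5 h1 h2 hm (d (i-1)) (e (i-1)) _
          _ = ppa K N i ^ d i * (ppa K N (i-1) ^ d (i-1) * (m *
                (ppa K N (i-1) ^ e (i-1) * (ppa K N i ^ (e i + 1) * 1)))) := by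
              rw [← heq, powMergeR]
          _ = ppa K N i ^ d i * (wp K N (midWd d i ++ midWe e i) *
                (ppa K N i ^ (e i + 1) * 1)) := mulC _ (hmw _).symm
    · -- the inequalities
      intro j hj1 hj2
      have hj := hnf j hj1 hj2
      rw [Function.update_apply]
      split_ifs with h
      · rw [h] at hj ⊢
        omega
      · exact hj
  · -- case 2 : d i < d (i-1) + e (i-1)
    intro hlt
    constructor
    · rcases Nat.lt_or_ge i (N-1) with hilt | hitop
      · have hp : d (i+1) ≤ d i + e i := by
          have h := hnf (i+1) (by omega) (by omega)
          rwa [Nat.add_sub_cancel] at h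
        have hTgt : nfMon K N (Function.update d i (d i + 1)) e
            = phiD K N d (N-2-i) * (ppa K N (i+1) ^ d (i+1) * (ppa K N i ^ (d i + 1) *
                (wp K N (midWd d i ++ midWe e i) * (ppa K N i ^ e i * restE K N e i)))) := by
          rw [nfSplit _ e hN h1 h2, hphiD _ (by omega), phiD_split d hN h1 (by omega),
            hmidWd, Function.update_self]
          simp only [mul_assoc]
        rw [hTgt, nfSplit d e hN h1 h2, phiD_split d hN h1 (by omega)]
        simp only [mul_assoc]
        calc ppa K N i * (phiD K N d (N-2-i) * (ppa K N (i+1) ^ d (i+1) * (ppa K N i ^ d i *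
                (wp K N (midWd d i ++ midWe e i) * (ppa K N i ^ e i * restE K N e i)))))
            = phiD K N d (N-2-i) * (ppa K N i * (ppa K N (i+1) ^ d (i+1) * (ppa K N i ^ d i *
                (wp K N (midWd d i ++ midWe e i) * (ppa K N i ^ e i * restE K N e i))))) :=
              swapR (commute_phiD d _ (by omega)) _
          _ = phiD K N d (N-2-i) * (ppa K N (i+1) ^ d (i+1) * (ppa K N i * (ppa K N i ^ d i *
                (wp K N (midWd d i ++ midWe e i) * (ppa K N i ^ e i * restE K N e i))))) :=
              mulC _ (lemB (by omega) (by omega) (d (i+1)) (d i) (e i)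
                (midWd d i ++ midWe e i) (restE K N e i) hp hML)
          _ = phiD K N d (N-2-i) * (ppa K N (i+1) ^ d (i+1) * (ppa K N i ^ (d i + 1) *
                (wp K N (midWd d i ++ midWe e i) * (ppa K N i ^ e i * restE K N e i)))) :=
              mulC _ (mulC _ (powMergeR _))
      · have hphi0 : phiD K N d (N-1-i) = 1 := by
          rw [phiD, show N-1-i = 0 by omega]; rfl
        have hphi0' : phiD K N (Function.update d i (d i + 1)) (N-1-i) = 1 := by
          rw [phiD, show N-1-i = 0 by omega]; rfl
        have hrest0 : restE K N e i = 1 := by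
          rw [restE, show N-1-i = 0 by omega]; rfl
        have hTgt : nfMon K N (Function.update d i (d i + 1)) e
            = ppa K N i ^ (d i + 1) * (wp K N (midWd d i ++ midWe e i) *
                (ppa K N i ^ e i * 1)) := by
          rw [nfSplit _ e hN h1 h2, hphi0', hrest0, hmidWd, Function.update_self, one_mul]
        rw [hTgt, nfSplit d e hN h1 h2, hphi0, hrest0, one_mul]
        exact powMergeR _
    · intro j hj1 hj2
      have hj := hnf j hj1 hj2
      rw [Function.update_apply, Function.update_apply]
      rcases eq_or_ne j i with rfl | hne
      · rw [if_pos rfl, if_neg (by omega)]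
        omega
      · rw [if_neg hne]
        split_ifs with h
        · rw [h] at hj ⊢
          omega
        · exact hj
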